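/- arXiv:1101.1447 — 3 statements merged into one kernel-verified Lean document; each statement's English description precedes it below -/
import Mathlib

section
/- Let g(ξ) = |ξ|^{-1} exp(2A|ξ| + 2b₁ξ₁ + 2C) for ξ ∈ ℝ^d \ {0}, where A < 0, b₁ > 0, C ∈ ℝ, and d ≥ 2. Then ∫_{ℝ^d} g(ξ) ξ₁ dξ > 0. -/
open MeasureTheory

private lemma pow_add_one_le_exp {c : ℝ} (hc : 0 < c) (n : ℕ) (hn : 1 ≤ n) {t : ℝ} (ht : 0 ≤ t) :
    (1 + t) ^ n ≤ (max 1 ((n : ℝ) / c)) ^ n * Real.exp (c * t) := by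
  set K : ℝ := max 1 ((n : ℝ) / c) with hKdef
  have hK1 : (1 : ℝ) ≤ K := le_max_left _ _
  have hKnc : (n : ℝ) / c ≤ K := le_max_right _ _
  have hn' : (0 : ℝ) < n := by exact_mod_cast hn
  have hKc : 1 ≤ K * c / n := by
    rw [le_div_iff₀ hn']
    have := (div_le_iff₀ hc).mp hKnc
    nlinarith
  have h1 : 1 + t ≤ K * (1 + c * t / n) := by
    have h2 : t ≤ (K * c / n) * t := le_mul_of_one_le_left ht hKc
    have : K * (1 + c * t / n) = K + (K * c / n) * t := by ring
    rw [this]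
    linarith
  calc (1 + t) ^ n ≤ (K * (1 + c * t / n)) ^ n := by
        apply pow_le_pow_left₀ (by linarith) h1
    _ = K ^ n * (1 + c * t / n) ^ n := mul_pow _ _ _
    _ ≤ K ^ n * Real.exp (c * t / n) ^ n := by
        have h3 : 1 + c * t / n ≤ Real.exp (c * t / n) := by
          have := Real.add_one_le_exp (c * t / n); linarith
        have h4 : (0:ℝ) ≤ 1 + c * t / n := by positivity
        have h5 : (1 + c * t / n) ^ n ≤ Real.exp (c * t / n) ^ n :=
          pow_le_pow_left₀ h4 h3 n
        have hK0 : (0:ℝ) ≤ K ^ n := by positivity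
        exact mul_le_mul_of_nonneg_left h5 hK0
    _ = K ^ n * Real.exp (c * t) := by
        rw [← Real.exp_nat_mul]
        congr 1
        field_simp

theorem positive_first_moment (d : ℕ) (hd : 2 ≤ d) (A b₁ C : ℝ)
    (hA : A < 0) (hb : 0 < b₁) (hbA : b₁ < -A)
    (g : EuclideanSpace ℝ (Fin d) → ℝ)
    (hg : ∀ ξ : EuclideanSpace ℝ (Fin d), ξ ≠ 0 →
      g ξ = ‖ξ‖⁻¹ * Real.exp (2 * A * ‖ξ‖ + 2 * b₁ * ξ ⟨0, by omega⟩ + 2 * C)) :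
    0 < ∫ ξ : EuclideanSpace ℝ (Fin d), g ξ * ξ ⟨0, by omega⟩ := by
  set i0 : Fin d := ⟨0, by omega⟩ with hi0
  show 0 < ∫ ξ : EuclideanSpace ℝ (Fin d), g ξ * ξ i0
  set F : EuclideanSpace ℝ (Fin d) → ℝ :=
    fun ξ => (‖ξ‖⁻¹ * Real.exp (2 * A * ‖ξ‖ + 2 * b₁ * ξ i0 + 2 * C)) * ξ i0 with hFdef
  -- coordinate bound
  have hcoord : ∀ ξ : EuclideanSpace ℝ (Fin d), |ξ i0| ≤ ‖ξ‖ := by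
    intro ξ
    have h := abs_real_inner_le_norm (EuclideanSpace.single i0 (1:ℝ)) ξ
    simpa [EuclideanSpace.inner_single_left, EuclideanSpace.norm_single] using h
  -- measurability
  have hFm : Measurable F := by
    have hc : Continuous fun ξ : EuclideanSpace ℝ (Fin d) => ξ i0 :=
      (EuclideanSpace.proj i0 : EuclideanSpace ℝ (Fin d) →L[ℝ] ℝ).continuous
    fun_prop
  -- integrability
  have hc0 : (0:ℝ) < -(2*(A+b₁)) := by linarith
  set c : ℝ := -(2*(A+b₁)) with hcdef
  set n : ℕ := d + 1 with hndef
  set K : ℝ := max 1 ((n : ℝ) / c) with hKdef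
  have hK1 : (1:ℝ) ≤ K := le_max_left _ _
  set M : ℝ := Real.exp (2*C) * K ^ n with hMdef
  have hbound_int : Integrable
      (fun ξ : EuclideanSpace ℝ (Fin d) => M * (1+‖ξ‖) ^ (-(n:ℝ))) := by
    apply Integrable.const_mul
    apply integrable_one_add_norm (E := EuclideanSpace ℝ (Fin d))
    rw [finrank_euclideanSpace_fin]
    exact_mod_cast Nat.lt_succ_self d
  have hFle : ∀ ξ : EuclideanSpace ℝ (Fin d), ‖F ξ‖ ≤ M * (1+‖ξ‖) ^ (-(n:ℝ)) := by
    intro ξ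
    have h1 : ‖ξ‖⁻¹ * |ξ i0| ≤ 1 := by
      rcases eq_or_ne ξ 0 with rfl | hξ
      · simp
      · have hn0 : (0:ℝ) < ‖ξ‖ := norm_pos_iff.mpr hξ
        rw [inv_mul_le_iff₀ hn0]
        simpa using hcoord ξ
    have h2 : Real.exp (2 * A * ‖ξ‖ + 2 * b₁ * ξ i0 + 2 * C)
        ≤ Real.exp (2*C) * Real.exp (-(c * ‖ξ‖)) := by
      rw [← Real.exp_add]
      apply Real.exp_le_exp.mpr
      have : ξ i0 ≤ ‖ξ‖ := (le_abs_self _).trans (hcoord ξ)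
      nlinarith [norm_nonneg ξ]
    have h3 : Real.exp (-(c * ‖ξ‖)) ≤ K ^ n * (1+‖ξ‖) ^ (-(n:ℝ)) := by
      have hpow := pow_add_one_le_exp hc0 n (by omega) (norm_nonneg ξ)
      have h1n : (0:ℝ) < 1 + ‖ξ‖ := by positivity
      have hp : (0:ℝ) < (1+‖ξ‖)^n := by positivity
      have goal' : (1:ℝ)/Real.exp (c*‖ξ‖) ≤ K^n/(1+‖ξ‖)^n := by
        rw [div_le_div_iff₀ (Real.exp_pos _) hp, one_mul]
        exact hpow
      calc Real.exp (-(c * ‖ξ‖)) = 1/Real.exp (c*‖ξ‖) := by rw [Real.exp_neg]; ring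
        _ ≤ K^n/(1+‖ξ‖)^n := goal'
        _ = K ^ n * (1+‖ξ‖) ^ (-(n:ℝ)) := by
            rw [Real.rpow_neg h1n.le, Real.rpow_natCast, div_eq_mul_inv]
    calc ‖F ξ‖ = (‖ξ‖⁻¹ * |ξ i0|) * Real.exp (2 * A * ‖ξ‖ + 2 * b₁ * ξ i0 + 2 * C) := by
          rw [hFdef]
          simp only [norm_mul, Real.norm_eq_abs, abs_mul]
          rw [abs_of_nonneg (inv_nonneg.mpr (norm_nonneg ξ)),
            abs_of_nonneg (Real.exp_pos _).le]
          ring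
      _ ≤ 1 * (Real.exp (2*C) * (K ^ n * (1+‖ξ‖) ^ (-(n:ℝ)))) := by
          apply mul_le_mul h1 _ (Real.exp_pos _).le zero_le_one
          exact h2.trans (by
            apply mul_le_mul_of_nonneg_left h3 (Real.exp_pos _).le)
      _ = M * (1+‖ξ‖) ^ (-(n:ℝ)) := by rw [hMdef]; ring
  have hFint : Integrable F :=
    hbound_int.mono' hFm.aestronglyMeasurable (Filter.Eventually.of_forall hFle)
  -- reflection
  set T : EuclideanSpace ℝ (Fin d) ≃ₗᵢ[ℝ] EuclideanSpace ℝ (Fin d) :=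
    LinearIsometryEquiv.piLpCongrRight 2
      (fun i => if i = i0 then LinearIsometryEquiv.neg ℝ else LinearIsometryEquiv.refl ℝ ℝ)
    with hTdef
  have hT0 : ∀ ξ : EuclideanSpace ℝ (Fin d), T ξ i0 = -(ξ i0) := by
    intro ξ
    simp [hTdef]
  have hTnorm : ∀ ξ : EuclideanSpace ℝ (Fin d), ‖T ξ‖ = ‖ξ‖ := T.norm_map
  have hFT : ∀ ξ : EuclideanSpace ℝ (Fin d),
      F (T ξ) = (‖ξ‖⁻¹ * Real.exp (2 * A * ‖ξ‖ + 2 * b₁ * (-(ξ i0)) + 2 * C)) * (-(ξ i0)) := by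
    intro ξ
    rw [hFdef]
    simp only [hTnorm, hT0]
  have hTint : (∫ ξ : EuclideanSpace ℝ (Fin d), F (T ξ)) = ∫ ξ, F ξ :=
    T.measurePreserving.integral_comp T.toHomeomorph.measurableEmbedding F
  have hFTint : Integrable (fun ξ => F (T ξ)) :=
    T.measurePreserving.integrable_comp_emb T.toHomeomorph.measurableEmbedding |>.mpr hFint
  -- nonnegativity of the sum
  set H : EuclideanSpace ℝ (Fin d) → ℝ := fun ξ => F ξ + F (T ξ) with hHdef
  have key : ∀ x a s : ℝ, 0 < s → (x ≠ 0 → 0 < x * (Real.exp (a + s*x) - Real.exp (a - s*x)))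
      ∧ 0 ≤ x * (Real.exp (a + s*x) - Real.exp (a - s*x)) := by
    intro x a s hs
    rcases lt_trichotomy x 0 with hx | hx | hx
    · have : Real.exp (a + s*x) < Real.exp (a - s*x) := by
        apply Real.exp_lt_exp.mpr; nlinarith
      constructor
      · intro _; nlinarith
      · nlinarith
    · subst hx; simp
    · have : Real.exp (a - s*x) < Real.exp (a + s*x) := by
        apply Real.exp_lt_exp.mpr; nlinarith
      constructor
      · intro _; nlinarith
      · nlinarith
  have hHform : ∀ ξ : EuclideanSpace ℝ (Fin d),
      H ξ = ‖ξ‖⁻¹ * (ξ i0 * (Real.exp ((2*A*‖ξ‖+2*C) + (2*b₁)*(ξ i0))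
        - Real.exp ((2*A*‖ξ‖+2*C) - (2*b₁)*(ξ i0)))) := by
    intro ξ
    have hFx : F ξ = ‖ξ‖⁻¹ * Real.exp (2 * A * ‖ξ‖ + 2 * b₁ * ξ i0 + 2 * C) * ξ i0 := rfl
    have hHx : H ξ = F ξ + F (T ξ) := rfl
    rw [hHx, hFx, hFT ξ]
    rw [show 2 * A * ‖ξ‖ + 2 * b₁ * ξ i0 + 2 * C = (2*A*‖ξ‖+2*C) + (2*b₁)*(ξ i0) from by ring,
      show 2 * A * ‖ξ‖ + 2 * b₁ * (-(ξ i0)) + 2 * C = (2*A*‖ξ‖+2*C) - (2*b₁)*(ξ i0) from by ring]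
    ring
  have hb2 : (0:ℝ) < 2*b₁ := by linarith
  have hHnn : ∀ ξ, 0 ≤ H ξ := by
    intro ξ
    rw [hHform]
    exact mul_nonneg (inv_nonneg.mpr (norm_nonneg ξ))
      ((key (ξ i0) _ _ hb2).2)
  have hHpos : ∀ ξ : EuclideanSpace ℝ (Fin d), ξ i0 ≠ 0 → 0 < H ξ := by
    intro ξ hx
    have hξ : ξ ≠ 0 := fun h => hx (by rw [h]; rfl)
    rw [hHform]
    exact mul_pos (inv_pos.mpr (norm_pos_iff.mpr hξ))
      ((key (ξ i0) _ _ hb2).1 hx)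
  have hHint : Integrable H := hFint.add hFTint
  -- the hyperplane has measure zero
  have hker : volume {ξ : EuclideanSpace ℝ (Fin d) | ξ i0 = 0} = 0 := by
    have heq : {ξ : EuclideanSpace ℝ (Fin d) | ξ i0 = 0}
        = (LinearMap.ker ((EuclideanSpace.proj i0 : EuclideanSpace ℝ (Fin d) →L[ℝ] ℝ)
            : EuclideanSpace ℝ (Fin d) →ₗ[ℝ] ℝ) : Set (EuclideanSpace ℝ (Fin d))) := by
      ext ξ; simp [LinearMap.mem_ker]
    rw [heq]
    apply Measure.addHaar_submodule
    intro h
    have h1 : (EuclideanSpace.single i0 (1:ℝ)) ∈ LinearMap.ker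
        ((EuclideanSpace.proj i0 : EuclideanSpace ℝ (Fin d) →L[ℝ] ℝ)
          : EuclideanSpace ℝ (Fin d) →ₗ[ℝ] ℝ) := h ▸ Submodule.mem_top
    rw [LinearMap.mem_ker] at h1
    simp at h1
  -- positivity of the integral of H
  have hsupp : {ξ : EuclideanSpace ℝ (Fin d) | ξ i0 ≠ 0} ⊆ Function.support H := by
    intro ξ hξ
    exact (hHpos ξ hξ).ne'
  have hsupp_pos : 0 < volume (Function.support H) := by
    rcases eq_or_ne (volume (Function.support H)) 0 with h0 | h0
    · exfalso
      have hcover : (Set.univ : Set (EuclideanSpace ℝ (Fin d)))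
          ⊆ Function.support H ∪ {ξ | ξ i0 = 0} := by
        intro ξ _
        rcases eq_or_ne (ξ i0) 0 with h | h
        · exact Or.inr h
        · exact Or.inl (hsupp h)
      have : volume (Set.univ : Set (EuclideanSpace ℝ (Fin d))) = 0 := by
        refine le_antisymm ?_ (zero_le)
        calc volume (Set.univ : Set (EuclideanSpace ℝ (Fin d)))
            ≤ volume (Function.support H ∪ {ξ | ξ i0 = 0}) := measure_mono hcover
          _ ≤ volume (Function.support H) + volume {ξ : EuclideanSpace ℝ (Fin d) | ξ i0 = 0} :=
              measure_union_le _ _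
          _ = 0 := by rw [h0, hker, add_zero]
      have hopen : (0:ENNReal) < volume (Set.univ : Set (EuclideanSpace ℝ (Fin d))) :=
        isOpen_univ.measure_pos volume ⟨0, trivial⟩
      exact hopen.ne' this
    · exact pos_iff_ne_zero.mpr h0
  have hHI : 0 < ∫ ξ, H ξ :=
    (integral_pos_iff_support_of_nonneg hHnn hHint).mpr hsupp_pos
  have hsum : (∫ ξ, H ξ) = 2 * ∫ ξ, F ξ := by
    rw [hHdef]
    rw [integral_add hFint hFTint, hTint]
    ring
  have hFI : 0 < ∫ ξ, F ξ := by linarith [hsum ▸ hHI]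
  -- finally, the integrand agrees with F a.e.
  have hae : (fun ξ : EuclideanSpace ℝ (Fin d) => g ξ * ξ i0) =ᵐ[volume] F := by
    have hmem : ∀ᵐ ξ ∂(volume : Measure (EuclideanSpace ℝ (Fin d))), ξ i0 ≠ 0 := by
      rw [ae_iff]
      simpa using hker
    filter_upwards [hmem] with ξ hx
    have hξ0 : ξ ≠ 0 := fun h => hx (by rw [h]; rfl)
    rw [hg ξ hξ0]
  rw [integral_congr_ae hae]
  exact hFI
end

section
/- Let d ≥ 2 and let H : {(τ,ξ) ∈ ℝ × ℝ^d : τ > |ξ|} → ℂ be a function satisfying H(X)H(Y) = H(X+Y) for all X, Y in the open solid light cone, with H continuous and H not identically zero. Then there exist a ∈ ℂ and b ∈ ℂ^d such that H(τ,ξ) = exp(aτ + b·ξ) for all (τ,ξ) with τ > |ξ|. -/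
open intervalIntegral MeasureTheory Filter

lemma one_dim_char (φ : ℝ → ℂ) (hc : Continuous φ) (h0 : φ 0 = 1)
    (hm : ∀ s t : ℝ, φ (s + t) = φ s * φ t) :
    ∃ c : ℂ, ∀ t : ℝ, φ t = Complex.exp (c * t) := by
  set F : ℝ → ℂ := fun t => ∫ s in (0:ℝ)..t, φ s with hF
  have hint : ∀ a b : ℝ, IntervalIntegrable φ volume a b :=
    fun a b => hc.intervalIntegrable a b
  have hFderiv : ∀ t : ℝ, HasDerivAt F (φ t) t := fun t =>
    integral_hasDerivAt_right (hint 0 t)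
      (hc.stronglyMeasurable.stronglyMeasurableAtFilter) hc.continuousAt
  -- find δ > 0 with F δ ≠ 0
  have hF0 : F 0 = 0 := intervalIntegral.integral_same
  obtain ⟨δ, hδpos, hFδ⟩ : ∃ δ : ℝ, 0 < δ ∧ F δ ≠ 0 := by
    have h1 : HasDerivAt F 1 0 := h0 ▸ hFderiv 0
    have hslope := hasDerivAt_iff_tendsto_slope.mp h1
    have hne : ∀ᶠ x in nhdsWithin 0 {(0:ℝ)}ᶜ, slope F 0 x ≠ 0 := by
      have : {(1:ℂ)}ᶜ ∈ nhds (1:ℂ) → True := fun _ => trivial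
      exact hslope (isOpen_compl_singleton.mem_nhds (by norm_num) :
        {(0:ℂ)}ᶜ ∈ nhds (1:ℂ))
    have hmem : ∀ᶠ x in nhdsWithin 0 (Set.Ioi (0:ℝ)), slope F 0 x ≠ 0 :=
      hne.filter_mono (nhdsWithin_mono 0 (fun x hx => ne_of_gt hx))
    obtain ⟨x, hx, hxpos⟩ := (hmem.and self_mem_nhdsWithin).exists
    refine ⟨x, hxpos, fun h => hx ?_⟩
    simp [slope, hF0, h]
  -- φ t = (F (t + δ) - F t) / F δ
  have key : ∀ t : ℝ, φ t * F δ = F (t + δ) - F t := by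
    intro t
    have h1 : F (t + δ) - F t = ∫ s in t..(t+δ), φ s := by
      have h := integral_add_adjacent_intervals (hint 0 t) (hint t (t+δ))
      simp only [hF]
      rw [← h]; ring
    have h2 : (∫ s in t..(t+δ), φ s) = ∫ s in (0:ℝ)..δ, φ (t + s) := by
      rw [intervalIntegral.integral_comp_add_left φ t, add_zero]
    have h3 : (∫ s in (0:ℝ)..δ, φ (t + s)) = φ t * F δ := by
      simp_rw [hm t]
      rw [intervalIntegral.integral_const_mul]
    rw [h1, h2, h3]
  -- hence φ has a derivative everywhere
  have hφderiv : ∀ t : ℝ, HasDerivAt φ ((φ (t + δ) - φ t) * (F δ)⁻¹) t := by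
    intro t
    have hd : HasDerivAt (fun t => F (t + δ) - F t) (φ (t + δ) - φ t) t := by
      have h1 : HasDerivAt (fun t : ℝ => F (t + δ)) (φ (t + δ)) t :=
        HasDerivAt.comp_add_const t δ (hFderiv (t + δ))
      exact h1.sub (hFderiv t)
    have hd2 : HasDerivAt (fun t => (F (t + δ) - F t) * (F δ)⁻¹)
        ((φ (t + δ) - φ t) * (F δ)⁻¹) t := hd.mul_const _
    refine hd2.congr_of_eventuallyEq (Filter.Eventually.of_forall fun x => ?_)
    field_simp [key x]
    exact key x
  -- derivative satisfies m t = c * φ t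
  set c : ℂ := (φ (0 + δ) - φ 0) * (F δ)⁻¹ with hcdef
  have hchain : ∀ t : ℝ, HasDerivAt φ (c * φ t) t := by
    intro t
    have h1 : HasDerivAt (fun s : ℝ => φ (t + s)) ((φ (t + δ) - φ t) * (F δ)⁻¹) 0 := by
      have := HasDerivAt.comp_const_add t (0:ℝ) (by simpa using hφderiv t)
      simpa using this
    have h2 : HasDerivAt (fun s : ℝ => φ t * φ s) (φ t * c) 0 := by
      simpa [hcdef] using (hφderiv 0).const_mul (φ t)
    have heq : (fun s : ℝ => φ (t + s)) = fun s : ℝ => φ t * φ s := funext fun s => hm t s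
    rw [heq] at h1
    have hu := h1.unique h2
    have h5 : c * φ t = (φ (t + δ) - φ t) * (F δ)⁻¹ := by
      rw [mul_comm c, ← hu]
    exact h5 ▸ hφderiv t
  -- conclude
  refine ⟨c, fun t => ?_⟩
  set g : ℝ → ℂ := fun t => φ t * Complex.exp (-(c * t)) with hg
  have hgderiv : ∀ t : ℝ, HasDerivAt g 0 t := by
    intro t
    have he : HasDerivAt (fun t : ℝ => Complex.exp (-(c * t))) (-c * Complex.exp (-(c * t))) t := by
      have hlin : HasDerivAt (fun t : ℝ => -(c * t)) (-c) t := by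
        have := ((Complex.ofRealCLM.hasDerivAt (x := t)).const_mul c).neg
        simp only [Complex.ofRealCLM_apply, Complex.ofReal_one, mul_one] at this
        exact this
      simpa [mul_comm, Function.comp_def] using (Complex.hasDerivAt_exp _).comp t hlin
    have : HasDerivAt g (c * φ t * Complex.exp (-(c * t)) + φ t * (-c * Complex.exp (-(c * t)))) t :=
      ((hchain t).mul he)
    convert this using 1
    ring
  have hgconst : ∀ t : ℝ, g t = g 0 := by
    intro t
    have : ∀ x : ℝ, deriv g x = 0 := fun x => (hgderiv x).deriv
    have hdg : Differentiable ℝ g := fun x => (hgderiv x).differentiableAt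
    exact is_const_of_deriv_eq_zero hdg this t 0
  have h6 : φ t * Complex.exp (-(c * t)) = 1 := by
    have := hgconst t
    simpa [hg, h0] using this
  calc φ t = φ t * (Complex.exp (-(c * t)) * Complex.exp (c * t)) := by
        rw [← Complex.exp_add]; simp
    _ = 1 * Complex.exp (c * t) := by rw [← mul_assoc, h6]
    _ = Complex.exp (c * t) := one_mul _

theorem cone_multiplicative_characterisation (d : ℕ) (hd : 2 ≤ d)
    (H : ℝ × EuclideanSpace ℝ (Fin d) → ℂ)
    (hcont : ContinuousOn H {p : ℝ × EuclideanSpace ℝ (Fin d) | ‖p.2‖ < p.1})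
    (hmul : ∀ X Y : ℝ × EuclideanSpace ℝ (Fin d), ‖X.2‖ < X.1 → ‖Y.2‖ < Y.1 →
      H X * H Y = H (X + Y))
    (hne : ∃ X : ℝ × EuclideanSpace ℝ (Fin d), ‖X.2‖ < X.1 ∧ H X ≠ 0) :
    ∃ (a : ℂ) (b : Fin d → ℂ), ∀ p : ℝ × EuclideanSpace ℝ (Fin d), ‖p.2‖ < p.1 →
      H p = Complex.exp (a * p.1 + ∑ j, b j * p.2 j) := by
  classical
  have coneadd : ∀ X Y : ℝ × EuclideanSpace ℝ (Fin d), ‖X.2‖ < X.1 → ‖Y.2‖ < Y.1 →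
      ‖(X + Y).2‖ < (X + Y).1 := by
    intro X Y hX hY
    calc ‖(X + Y).2‖ = ‖X.2 + Y.2‖ := rfl
      _ ≤ ‖X.2‖ + ‖Y.2‖ := norm_add_le _ _
      _ < X.1 + Y.1 := add_lt_add hX hY
      _ = (X + Y).1 := rfl
  obtain ⟨X₀, hX₀c, hX₀⟩ := hne
  have hgap : 0 < X₀.1 - ‖X₀.2‖ := by linarith
  -- H does not vanish on multiples of X₀
  have hpow : ∀ n : ℕ, ‖((((n:ℝ)+1) • X₀).2)‖ < (((n:ℝ)+1) • X₀).1 ∧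
      H (((n:ℝ)+1) • X₀) ≠ 0 := by
    intro n
    induction n with
    | zero =>
      simp only [Nat.cast_zero, zero_add, one_smul]
      exact ⟨hX₀c, hX₀⟩
    | succ n ih =>
      have hc : ((↑(n+1):ℝ)+1) • X₀ = ((n:ℝ)+1) • X₀ + X₀ := by
        push_cast
        rw [add_smul, one_smul]
      rw [hc]
      refine ⟨coneadd _ _ ih.1 hX₀c, ?_⟩
      rw [← hmul _ _ ih.1 hX₀c]
      exact mul_ne_zero ih.2 hX₀
  -- H does not vanish anywhere on the cone
  have hnz : ∀ X : ℝ × EuclideanSpace ℝ (Fin d), ‖X.2‖ < X.1 → H X ≠ 0 := by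
    intro X hX
    obtain ⟨n, hn⟩ := exists_nat_gt ((X.1 + ‖X.2‖) / (X₀.1 - ‖X₀.2‖))
    have hn' : X.1 + ‖X.2‖ < (n:ℝ) * (X₀.1 - ‖X₀.2‖) := (div_lt_iff₀ hgap).mp hn
    have hnn : X.1 + ‖X.2‖ < ((n:ℝ)+1) * (X₀.1 - ‖X₀.2‖) :=
      hn'.trans (mul_lt_mul_of_pos_right (lt_add_one (n:ℝ)) hgap)
    set Y : ℝ × EuclideanSpace ℝ (Fin d) := ((n:ℝ)+1) • X₀ - X with hYdef
    have hY2 : ‖Y.2‖ ≤ ((n:ℝ)+1) * ‖X₀.2‖ + ‖X.2‖ := by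
      have e : Y.2 = ((n:ℝ)+1) • X₀.2 - X.2 := rfl
      rw [e]
      calc ‖((n:ℝ)+1) • X₀.2 - X.2‖ ≤ ‖((n:ℝ)+1) • X₀.2‖ + ‖X.2‖ := norm_sub_le _ _
        _ = ((n:ℝ)+1) * ‖X₀.2‖ + ‖X.2‖ := by
            rw [norm_smul, Real.norm_eq_abs, abs_of_nonneg (by positivity)]
    have hYc : ‖Y.2‖ < Y.1 := by
      have e : Y.1 = ((n:ℝ)+1) * X₀.1 - X.1 := rfl
      rw [e]
      nlinarith [hY2, hnn]
    have hXY : X + Y = ((n:ℝ)+1) • X₀ := by rw [hYdef]; abel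
    intro h0
    have h := hmul X Y hX hYc
    rw [h0, zero_mul, hXY] at h
    exact (hpow n).2 h.symm
  -- a convenient shift into the cone
  set T : ℝ × EuclideanSpace ℝ (Fin d) → ℝ := fun v => 2*‖v‖+1 with hT
  have hTpos : ∀ v, 0 < T v := by
    intro v; simp only [hT]; positivity
  have hTadm : ∀ v : ℝ × EuclideanSpace ℝ (Fin d), ‖v.2‖ < v.1 + T v := by
    intro v
    have h1 : |v.1| ≤ ‖v‖ := by simpa [Real.norm_eq_abs] using norm_fst_le v
    have h2 : ‖v.2‖ ≤ ‖v‖ := norm_snd_le v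
    have h3 : -v.1 ≤ |v.1| := neg_le_abs v.1
    simp only [hT]; linarith
  have hden : ∀ t : ℝ, 0 < t → H (t, (0 : EuclideanSpace ℝ (Fin d))) ≠ 0 :=
    fun t ht => hnz _ (by simpa using ht)
  -- independence of the shift
  have hind : ∀ (v : ℝ × EuclideanSpace ℝ (Fin d)) (t s : ℝ), 0 < t → 0 < s →
      ‖v.2‖ < v.1 + t → ‖v.2‖ < v.1 + s →
      H (v.1 + t, v.2) * H (s, (0 : EuclideanSpace ℝ (Fin d))) =
        H (v.1 + s, v.2) * H (t, 0) := by
    intro v t s ht hs hvt hvs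
    have e1 : ((v.1 + t, v.2) : ℝ × EuclideanSpace ℝ (Fin d)) + (s, 0) = (v.1 + t + s, v.2) := by
      ext <;> simp
    have e2 : ((v.1 + s, v.2) : ℝ × EuclideanSpace ℝ (Fin d)) + (t, 0) = (v.1 + t + s, v.2) := by
      ext <;> simp [add_right_comm]
    rw [hmul (v.1 + t, v.2) (s, 0) hvt
          (show ‖((s, (0:EuclideanSpace ℝ (Fin d)))).2‖ < s by simpa using hs), e1,
        hmul (v.1 + s, v.2) (t, 0) hvs
          (show ‖((t, (0:EuclideanSpace ℝ (Fin d)))).2‖ < t by simpa using ht), e2]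
  -- the globalisation G of H
  set G : ℝ × EuclideanSpace ℝ (Fin d) → ℂ :=
    fun v => H (v.1 + T v, v.2) * (H (T v, 0))⁻¹ with hG
  have hGval : ∀ (v : ℝ × EuclideanSpace ℝ (Fin d)) (t : ℝ), 0 < t → ‖v.2‖ < v.1 + t →
      G v = H (v.1 + t, v.2) * (H (t, 0))⁻¹ := by
    intro v t ht hvt
    have h := hind v (T v) t (hTpos v) ht (hTadm v) hvt
    have d1 := hden (T v) (hTpos v)
    have d2 := hden t ht
    simp only [hG]
    field_simp
    linear_combination h
  have hGcone : ∀ v : ℝ × EuclideanSpace ℝ (Fin d), ‖v.2‖ < v.1 → G v = H v := by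
    intro v hv
    have h := hmul v (T v, 0) hv (by simpa using hTpos v)
    have e : v + ((T v, 0) : ℝ × EuclideanSpace ℝ (Fin d)) = (v.1 + T v, v.2) := by
      ext <;> simp
    rw [e] at h
    simp only [hG]
    rw [← h, mul_assoc, mul_inv_cancel₀ (hden _ (hTpos v)), mul_one]
  have hGmul : ∀ v w : ℝ × EuclideanSpace ℝ (Fin d), G v * G w = G (v + w) := by
    intro v w
    have hv := hTadm v
    have hw := hTadm w
    have hvw : ‖(v+w).2‖ < (v+w).1 + (T v + T w) := by
      have h := norm_add_le v.2 w.2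
      have e : (v+w).2 = v.2 + w.2 := rfl
      have e1 : (v+w).1 = v.1 + w.1 := rfl
      rw [e, e1]; linarith
    rw [hGval (v+w) (T v + T w) (add_pos (hTpos v) (hTpos w)) hvw,
        hGval v (T v) (hTpos v) hv, hGval w (T w) (hTpos w) hw]
    have h1 : H (v.1 + T v, v.2) * H (w.1 + T w, w.2) = H ((v+w).1 + (T v + T w), (v+w).2) := by
      rw [hmul (v.1 + T v, v.2) (w.1 + T w, w.2) hv hw]
      congr 1
      ext
      · show v.1 + T v + (w.1 + T w) = (v+w).1 + (T v + T w)
        have : (v+w).1 = v.1 + w.1 := rfl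
        rw [this]; ring
      · rfl
    have h2 : H (T v, (0:EuclideanSpace ℝ (Fin d))) * H (T w, 0) = H (T v + T w, 0) := by
      rw [hmul (T v, 0) (T w, 0) (by simpa using hTpos v) (by simpa using hTpos w)]
      congr 1
      ext <;> simp
    rw [← h1, ← h2, mul_inv]
    ring
  have hG0 : G 0 = 1 := by
    simp only [hG, Prod.fst_zero, Prod.snd_zero, zero_add]
    exact mul_inv_cancel₀ (hden _ (hTpos 0))
  have hGcont : Continuous G := by
    have hTcont : Continuous T := by
      simp only [hT]
      exact (continuous_const.mul continuous_norm).add continuous_const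
    have hmap1 : Continuous fun v : ℝ × EuclideanSpace ℝ (Fin d) =>
        ((v.1 + T v, v.2) : ℝ × EuclideanSpace ℝ (Fin d)) :=
      (continuous_fst.add hTcont).prodMk continuous_snd
    have hc1 : Continuous fun v : ℝ × EuclideanSpace ℝ (Fin d) => H (v.1 + T v, v.2) :=
      hcont.comp_continuous hmap1 (fun v => by simpa using hTadm v)
    have hmap2 : Continuous fun v : ℝ × EuclideanSpace ℝ (Fin d) =>
        ((T v, 0) : ℝ × EuclideanSpace ℝ (Fin d)) :=
      hTcont.prodMk continuous_const
    have hc2 : Continuous fun v : ℝ × EuclideanSpace ℝ (Fin d) => H (T v, 0) :=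
      hcont.comp_continuous hmap2 (fun v => by simpa using hTpos v)
    simp only [hG]
    exact hc1.mul (hc2.inv₀ fun v => hden _ (hTpos v))
  -- one-dimensional characters of G
  have hφ : ∀ f : ℝ → ℝ × EuclideanSpace ℝ (Fin d), Continuous f →
      (∀ s t : ℝ, f (s+t) = f s + f t) →
      ∃ c : ℂ, ∀ t : ℝ, G (f t) = Complex.exp (c * t) := by
    intro f hf hadd
    have hf0 : f 0 = 0 := by
      have h := hadd 0 0
      rw [add_zero] at h
      exact (add_eq_left.mp h.symm)
    exact one_dim_char (fun t => G (f t)) (hGcont.comp hf)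
      (by show G (f 0) = 1; rw [hf0]; exact hG0)
      (fun s t => by show G (f (s + t)) = G (f s) * G (f t); rw [hadd]; exact (hGmul _ _).symm)
  obtain ⟨a, ha⟩ := hφ (fun t => ((t, 0) : ℝ × EuclideanSpace ℝ (Fin d)))
    (continuous_id.prodMk continuous_const)
    (fun s t => by ext <;> simp)
  have hbx : ∀ j : Fin d, ∃ c : ℂ, ∀ t : ℝ,
      G (0, EuclideanSpace.single j t) = Complex.exp (c * t) := by
    intro j
    refine hφ (fun t => ((0:ℝ), EuclideanSpace.single j t)) ?_ ?_
    · refine continuous_const.prodMk ?_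
      refine (continuous_id.smul continuous_const :
        Continuous fun t : ℝ => t • EuclideanSpace.single j (1:ℝ)).congr fun t => ?_
      ext i
      simp [EuclideanSpace.single_apply, PiLp.smul_apply, mul_ite]
    · intro s t
      ext i
      · simp
      · simp only [Prod.snd_add]
        show EuclideanSpace.single j (s + t) i
          = (EuclideanSpace.single j s + EuclideanSpace.single j t) i
        rw [PiLp.add_apply]
        simp only [EuclideanSpace.single_apply]
        split <;> simp
  choose b hb using hbx
  -- product over finite sums
  have hGsum : ∀ (s : Finset (Fin d)) (f : Fin d → ℝ × EuclideanSpace ℝ (Fin d)),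
      G (∑ j ∈ s, f j) = ∏ j ∈ s, G (f j) := by
    intro s f
    induction s using Finset.cons_induction with
    | empty => simpa using hG0
    | cons j s hj ih => rw [Finset.sum_cons, Finset.prod_cons, ← hGmul, ih]
  refine ⟨a, b, fun p hp => ?_⟩
  have hdec : p = ((p.1, 0) : ℝ × EuclideanSpace ℝ (Fin d))
      + ∑ j : Fin d, ((0:ℝ), EuclideanSpace.single j (p.2 j)) := by
    ext i
    · simp [Prod.fst_sum]
    · simp only [Prod.snd_add, Prod.snd_sum]
      rw [PiLp.add_apply]
      rw [show (∑ j : Fin d, EuclideanSpace.single j (p.2 j)) i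
          = ∑ j : Fin d, EuclideanSpace.single j (p.2 j) i from by
        simp [WithLp.ofLp_sum, Finset.sum_apply]]
      simp [EuclideanSpace.single_apply]
  calc H p = G p := (hGcone p hp).symm
    _ = G (((p.1, 0) : ℝ × EuclideanSpace ℝ (Fin d))
          + ∑ j : Fin d, ((0:ℝ), EuclideanSpace.single j (p.2 j))) := by rw [← hdec]
    _ = G (p.1, 0) * ∏ j : Fin d, G (0, EuclideanSpace.single j (p.2 j)) := by
        rw [← hGmul, hGsum]
    _ = Complex.exp (a * p.1) * ∏ j : Fin d, Complex.exp (b j * p.2 j) := by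
        rw [ha p.1]
        congr 1
        exact Finset.prod_congr rfl fun j _ => hb j (p.2 j)
    _ = Complex.exp (a * p.1 + ∑ j, b j * p.2 j) := by
        rw [Complex.exp_add, Complex.exp_sum]
end

section
/- Let d ≥ 2, and suppose continuous functions g : ℝ^d → ℂ and G : ℝ × ℝ^d → ℂ satisfy g(η₁)g(η₂) = G(|η₁| + |η₂|, η₁ + η₂) for all η₁, η₂ ∈ ℝ^d, with g(0) ≠ 0. Then there exist a, c ∈ ℂ and b ∈ ℂ^d such that g(ξ) = exp(a|ξ| + b·ξ + c) for all ξ ∈ ℝ^d. -/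
set_option maxHeartbeats 1000000

open Complex Real

/-- A complex exponent is determined by `exp (t * z)` for small nonneg `t`. -/
lemma exp_ray_unique {z w : ℂ}
    (h : ∀ t : ℝ, 0 ≤ t → Complex.exp (t * z) = Complex.exp (t * w)) : z = w := by
  by_contra hne
  have hzw : z - w ≠ 0 := sub_ne_zero.mpr hne
  set r : ℝ := ‖z - w‖ with hr
  have hrpos : 0 < r := norm_pos_iff.mpr hzw
  have h1 : Complex.exp ((r⁻¹ : ℝ) * (z - w)) = 1 := by
    rw [mul_sub, Complex.exp_sub, h r⁻¹ (by positivity), div_self (Complex.exp_ne_zero _)]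
  obtain ⟨n, hn⟩ := Complex.exp_eq_one_iff.mp h1
  have hnorm : ‖((r⁻¹ : ℝ) : ℂ) * (z - w)‖ = 1 := by
    rw [norm_mul, Complex.norm_real, norm_inv, Real.norm_eq_abs, abs_of_pos hrpos]
    rw [inv_mul_eq_div, ← hr, div_self hrpos.ne']
  rw [hn] at hnorm
  rcases eq_or_ne n 0 with h0 | h0
  · rw [h0] at hnorm; simp at hnorm
  · have : (1:ℝ) ≤ |(n:ℝ)| := by exact_mod_cast Int.one_le_abs h0
    have : ‖(n : ℂ) * (2 * ↑π * Complex.I)‖ = |(n:ℝ)| * (2 * π) := by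
      simp [norm_mul, Complex.norm_real, abs_of_pos Real.pi_pos, Complex.norm_intCast,
        mul_assoc]
    rw [this] at hnorm
    nlinarith [Real.pi_gt_three]


lemma ray_exp (φ : ℝ → ℂ) (hc : Continuous φ) (h0 : φ 0 = 1)
    (hmul : ∀ s t : ℝ, 0 ≤ s → 0 ≤ t → φ s * φ t = φ (s + t)) :
    ∃ z : ℂ, ∀ t : ℝ, 0 ≤ t → φ t = Complex.exp (t * z) := by
  -- find δ with ‖φ t - 1‖ < 1/2 on [0, δ]
  obtain ⟨ε, hεpos, hε⟩ := Metric.continuousAt_iff.mp (hc.continuousAt (x := 0)) (1/2) (by norm_num)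
  set δ : ℝ := ε / 2 with hδ
  have hδpos : 0 < δ := by positivity
  have hsmall : ∀ t ∈ Set.Icc (0:ℝ) δ, ‖φ t - 1‖ < 1/2 := by
    intro t ht
    have : dist t 0 < ε := by
      rw [Real.dist_eq, sub_zero, _root_.abs_of_nonneg ht.1]
      linarith [ht.2]
    simpa [dist_eq_norm, h0] using hε this
  have hre : ∀ t ∈ Set.Icc (0:ℝ) δ, (1:ℝ)/2 < (φ t).re := by
    intro t ht
    have h1 : |(φ t - 1).re| ≤ ‖φ t - 1‖ := Complex.abs_re_le_norm _
    have : (φ t - 1).re = (φ t).re - 1 := by simp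
    rw [this] at h1
    have := hsmall t ht
    cases abs_le.mp h1 with
    | intro h2 h3 => linarith
  have hne : ∀ t ∈ Set.Icc (0:ℝ) δ, φ t ≠ 0 := by
    intro t ht h
    have := hre t ht; rw [h] at this; simp at this; linarith
  set ψ : ℝ → ℂ := fun t => Complex.log (φ t) with hψ
  have hψcont : ∀ t ∈ Set.Icc (0:ℝ) δ, ContinuousAt ψ t := by
    intro t ht
    exact (continuousAt_clog (Or.inl (by linarith [hre t ht]))).comp hc.continuousAt
  have harg : ∀ t ∈ Set.Icc (0:ℝ) δ, |(ψ t).im| < π/2 := by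
    intro t ht
    rw [hψ]
    simp only [Complex.log_im]
    exact Complex.abs_arg_lt_pi_div_two_iff.mpr (Or.inl (by linarith [hre t ht]))
  -- additivity of ψ
  have hadd : ∀ s t : ℝ, s ∈ Set.Icc (0:ℝ) δ → t ∈ Set.Icc (0:ℝ) δ →
      s + t ∈ Set.Icc (0:ℝ) δ → ψ (s + t) = ψ s + ψ t := by
    intro s t hs ht hst
    have hexp : Complex.exp (ψ s + ψ t) = Complex.exp (ψ (s + t)) := by
      rw [Complex.exp_add, hψ]
      simp only
      rw [Complex.exp_log (hne s hs), Complex.exp_log (hne t ht),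
        Complex.exp_log (hne _ hst), hmul s t hs.1 ht.1]
    obtain ⟨n, hn⟩ := Complex.exp_eq_exp_iff_exists_int.mp hexp
    have him : (ψ s).im + (ψ t).im = (ψ (s+t)).im + n * (2 * π) := by
      have := congrArg Complex.im hn
      simpa [Complex.add_im, Complex.mul_im] using this
    have hn0 : n = 0 := by
      by_contra hn0
      have h1 : (1:ℝ) ≤ |(n:ℝ)| := by exact_mod_cast Int.one_le_abs hn0
      have h2 : |(n:ℝ) * (2*π)| = |(n:ℝ)| * (2*π) := by
        rw [abs_mul, _root_.abs_of_pos (by positivity : (0:ℝ) < 2*π)]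
      have h3 : |(n:ℝ) * (2*π)| < 3 * (π/2) := by
        have e : (n:ℝ) * (2*π) = (ψ s).im + (ψ t).im - (ψ (s+t)).im := by linarith
        rw [e]
        calc |(ψ s).im + (ψ t).im - (ψ (s+t)).im|
            ≤ |(ψ s).im| + |(ψ t).im| + |(ψ (s+t)).im| := by
              have := abs_sub (|(ψ s).im + (ψ t).im|) 0
              calc |(ψ s).im + (ψ t).im - (ψ (s+t)).im|
                  ≤ |(ψ s).im + (ψ t).im| + |(ψ (s+t)).im| := abs_sub _ _
                _ ≤ |(ψ s).im| + |(ψ t).im| + |(ψ (s+t)).im| := by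
                    have := abs_add_le ((ψ s).im) ((ψ t).im); linarith
          _ < 3 * (π/2) := by
              have := harg s hs; have := harg t ht; have := harg _ hst; linarith
      nlinarith [Real.pi_pos, h2, h3, mul_le_mul_of_nonneg_right h1 (le_of_lt (by positivity : (0:ℝ) < 2*π))]
    rw [hn0] at hn
    simp at hn
    rw [hn]
  have hψ0 : ψ 0 = 0 := by rw [hψ]; simp [h0]
  have hmemδ : δ ∈ Set.Icc (0:ℝ) δ := ⟨hδpos.le, le_refl δ⟩
  have hhalf : ∀ x ∈ Set.Icc (0:ℝ) δ, ψ (x/2) = ψ x / 2 := by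
    intro x hx
    have hx2 : x/2 ∈ Set.Icc (0:ℝ) δ := ⟨by linarith [hx.1], by linarith [hx.1, hx.2]⟩
    have h' := hadd (x/2) (x/2) hx2 hx2 (by rw [add_halves]; exact hx)
    rw [add_halves] at h'
    rw [h']; ring
  have hmemn : ∀ n : ℕ, δ / 2^n ∈ Set.Icc (0:ℝ) δ := by
    intro n
    have h1 : (1:ℝ) ≤ 2^n := one_le_pow₀ (by norm_num)
    constructor
    · positivity
    · rw [div_le_iff₀ (by positivity)]
      nlinarith
  have hpow2 : ∀ n : ℕ, ψ (δ / 2^n) = ψ δ / (2:ℂ)^n := by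
    intro n
    induction n with
    | zero => simp
    | succ n ih =>
      have : δ / 2^(n+1) = (δ / 2^n) / 2 := by rw [pow_succ]; ring
      rw [this, hhalf _ (hmemn n), ih, pow_succ, div_div]
  have hknat : ∀ k : ℕ, ∀ x : ℝ, 0 ≤ x → (k:ℝ)*x ≤ δ → ψ ((k:ℝ)*x) = (k:ℂ) * ψ x := by
    intro k
    induction k with
    | zero => intro x hx _; simp [hψ0]
    | succ k ih =>
      intro x hx hkx
      have hkx' : (k:ℝ)*x ≤ δ := by
        have : (k:ℝ)*x ≤ ((k:ℕ)+1:ℝ)*x := by nlinarith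
        push_cast at hkx ⊢
        nlinarith
      have hsplit : ((k+1:ℕ):ℝ)*x = (k:ℝ)*x + x := by push_cast; ring
      have hmem1 : (k:ℝ)*x ∈ Set.Icc (0:ℝ) δ := ⟨by positivity, hkx'⟩
      have hmem2 : x ∈ Set.Icc (0:ℝ) δ := by
        constructor
        · exact hx
        · have : x ≤ ((k+1:ℕ):ℝ)*x := by push_cast; nlinarith
          push_cast at hkx
          linarith
      have hmem3 : (k:ℝ)*x + x ∈ Set.Icc (0:ℝ) δ := by
        rw [← hsplit]
        exact ⟨by positivity, hkx⟩
      rw [hsplit, hadd _ _ hmem1 hmem2 hmem3, ih x hx hkx']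
      push_cast; ring
  have hδne : δ ≠ 0 := hδpos.ne'
  have hdyadic : ∀ n k : ℕ, (k:ℝ) ≤ 2^n →
      ψ ((k:ℝ) * (δ/2^n)) = (((k:ℝ) * (δ/2^n) : ℝ):ℂ) * (ψ δ / δ) := by
    intro n k hk
    have hle : (k:ℝ) * (δ/2^n) ≤ δ := by
      rw [mul_div_assoc'] at *
      rw [div_le_iff₀ (by positivity)]
      nlinarith [hδpos]
    rw [hknat k _ (by positivity) hle, hpow2 n]
    push_cast
    have h2 : ((2:ℂ)^n) ≠ 0 := pow_ne_zero _ two_ne_zero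
    have hδc : (δ:ℂ) ≠ 0 := by exact_mod_cast hδne
    field_simp
  set z : ℂ := ψ δ / δ with hz
  have hicc : ∀ t ∈ Set.Icc (0:ℝ) δ, ψ t = (t:ℂ) * z := by
    intro t ht
    set k : ℕ → ℤ := fun n => ⌊(2:ℝ)^n * (t/δ)⌋ with hkdef
    have htδ : t/δ ≤ 1 := by rw [div_le_one hδpos]; exact ht.2
    have htδ0 : 0 ≤ t/δ := div_nonneg ht.1 hδpos.le
    have hk0 : ∀ n, 0 ≤ k n := fun n => Int.floor_nonneg.mpr (mul_nonneg (pow_nonneg (by norm_num) n) htδ0)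
    have hkle : ∀ n, ((k n : ℝ)) ≤ 2^n := by
      intro n
      calc ((k n : ℝ)) ≤ (2:ℝ)^n * (t/δ) := Int.floor_le _
        _ ≤ 2^n := by nlinarith [pow_pos (by norm_num : (0:ℝ) < 2) n]
    set a : ℕ → ℝ := fun n => ((k n).toNat : ℝ) * (δ/2^n) with ha
    have hcast : ∀ n, (((k n).toNat : ℝ)) = ((k n : ℝ)) := by
      intro n
      exact_mod_cast Int.toNat_of_nonneg (hk0 n)
    have hup : ∀ n, a n ≤ t := by
      intro n
      rw [ha]
      simp only
      rw [hcast]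
      have h1 : ((k n : ℝ)) ≤ (2:ℝ)^n * (t/δ) := Int.floor_le _
      have h2 : (0:ℝ) < δ/2^n := by positivity
      calc ((k n:ℝ)) * (δ/2^n) ≤ ((2:ℝ)^n * (t/δ)) * (δ/2^n) := by nlinarith
        _ = t := by field_simp
    have hlo : ∀ n, t - δ/2^n ≤ a n := by
      intro n
      rw [ha]; simp only; rw [hcast]
      have h1 : (2:ℝ)^n * (t/δ) - 1 < ((k n:ℝ)) := Int.sub_one_lt_floor _
      have h2 : (0:ℝ) < δ/2^n := by positivity
      have := mul_le_mul_of_nonneg_right h1.le h2.le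
      calc t - δ/2^n = ((2:ℝ)^n * (t/δ) - 1) * (δ/2^n) := by field_simp
        _ ≤ ((k n:ℝ)) * (δ/2^n) := this
    have hconv : Filter.Tendsto a Filter.atTop (nhds t) := by
      have hABC : Filter.Tendsto (fun n : ℕ => t - δ/2^n) Filter.atTop (nhds t) := by
        have h1 : Filter.Tendsto (fun n : ℕ => δ/2^n) Filter.atTop (nhds 0) := by
          have := tendsto_pow_atTop_nhds_zero_of_lt_one (le_of_lt (by norm_num : (0:ℝ) < 1/2)) (by norm_num : (1:ℝ)/2 < 1)
          have h2 : (fun n : ℕ => δ/2^n) = fun n => δ * (1/2)^n := by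
            funext n; rw [div_pow, one_pow]; ring
          rw [h2]
          simpa using (this.const_mul δ)
        simpa using (tendsto_const_nhds.sub h1)
      exact tendsto_of_tendsto_of_tendsto_of_le_of_le hABC tendsto_const_nhds hlo hup
    have haicc : ∀ n, a n ∈ Set.Icc (0:ℝ) δ := by
      intro n
      constructor
      · rw [ha]; positivity
      · exact le_trans (hup n) ht.2
    have hψa : ∀ n, ψ (a n) = ((a n : ℝ):ℂ) * z := by
      intro n
      rw [ha]
      simp only
      rw [hcast] at *
      have := hdyadic n (k n).toNat (by rw [hcast]; exact hkle n)
      rw [hcast] at this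
      exact this
    have hl1 : Filter.Tendsto (fun n => ψ (a n)) Filter.atTop (nhds (ψ t)) :=
      ((hψcont t ht).tendsto).comp hconv
    have hl2 : Filter.Tendsto (fun n => ψ (a n)) Filter.atTop (nhds ((t:ℂ) * z)) := by
      have : (fun n => ψ (a n)) = fun n => ((a n : ℝ):ℂ) * z := by funext n; exact hψa n
      rw [this]
      exact ((Complex.continuous_ofReal.tendsto t).comp hconv).mul_const z
    exact tendsto_nhds_unique hl1 hl2
  have hφicc : ∀ t ∈ Set.Icc (0:ℝ) δ, φ t = Complex.exp ((t:ℂ) * z) := by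
    intro t ht
    rw [← hicc t ht, hψ]
    exact (Complex.exp_log (hne t ht)).symm
  have hpown : ∀ n : ℕ, ∀ t : ℝ, 0 ≤ t → φ ((n:ℝ) * t) = φ t ^ n := by
    intro n
    induction n with
    | zero => intro t _; simp [h0]
    | succ n ih =>
      intro t ht
      have : ((n+1:ℕ):ℝ)*t = (n:ℝ)*t + t := by push_cast; ring
      rw [this, ← hmul _ _ (by positivity) ht, ih t ht, pow_succ]
  refine ⟨z, fun t ht => ?_⟩
  set n : ℕ := ⌈t/δ⌉₊ + 1 with hn
  have hnpos : (0:ℝ) < n := by positivity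
  have htn : t/n ∈ Set.Icc (0:ℝ) δ := by
    constructor
    · positivity
    · rw [div_le_iff₀ hnpos]
      have h1 : t/δ ≤ (⌈t/δ⌉₊ : ℝ) := Nat.le_ceil _
      have h2 : t = δ * (t/δ) := by field_simp
      rw [h2]
      have : (⌈t/δ⌉₊ : ℝ) ≤ (n:ℝ) := by rw [hn]; push_cast; linarith
      calc δ * (t/δ) ≤ δ * (n:ℝ) := by nlinarith
        _ = δ * n := rfl
  have ht' : t = (n:ℝ) * (t/n) := by field_simp
  rw [ht', hpown n _ htn.1, hφicc _ htn]
  rw [← Complex.exp_nat_mul]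
  congr 1
  push_cast
  have : ((n:ℕ):ℂ) ≠ 0 := by exact_mod_cast hnpos.ne'
  field_simp


lemma exists_unit_orthogonal {d : ℕ} (hd : 2 ≤ d) (ξ : EuclideanSpace ℝ (Fin d)) :
    ∃ w : EuclideanSpace ℝ (Fin d), ‖w‖ = 1 ∧ inner ℝ ξ w = (0:ℝ) := by
  by_cases hξ : ξ = 0
  · have hpos : 0 < d := by omega
    refine ⟨EuclideanSpace.single ⟨0, hpos⟩ 1, ?_, ?_⟩
    · simp [EuclideanSpace.norm_single]
    · rw [hξ]; simp
  · have hKne : (ℝ ∙ ξ)ᗮ ≠ ⊥ := by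
      intro hbot
      have htop : (ℝ ∙ ξ) = ⊤ := Submodule.orthogonal_eq_bot_iff.mp hbot
      have h1 : Module.finrank ℝ (ℝ ∙ ξ) = 1 := finrank_span_singleton hξ
      have h2 : Module.finrank ℝ (EuclideanSpace ℝ (Fin d)) = d := by
        simp [finrank_euclideanSpace]
      rw [htop] at h1
      rw [finrank_top] at h1
      omega
    obtain ⟨w₀, hw₀mem, hw₀ne⟩ := Submodule.exists_mem_ne_zero_of_ne_bot hKne
    refine ⟨‖w₀‖⁻¹ • w₀, ?_, ?_⟩
    · rw [norm_smul, norm_inv, norm_norm, inv_mul_cancel₀ (norm_ne_zero_iff.mpr hw₀ne)]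
    · rw [real_inner_smul_right]
      have : inner ℝ ξ w₀ = (0:ℝ) :=
        hw₀mem ξ (Submodule.mem_span_singleton_self ξ)
      rw [this, mul_zero]

theorem functional_equation_maximisers (d : ℕ) (hd : 2 ≤ d)
    (g : EuclideanSpace ℝ (Fin d) → ℂ) (G : ℝ × EuclideanSpace ℝ (Fin d) → ℂ)
    (hg : Continuous g) (hG : Continuous G)
    (heq : ∀ η₁ η₂ : EuclideanSpace ℝ (Fin d), g η₁ * g η₂ = G (‖η₁‖ + ‖η₂‖, η₁ + η₂))
    (h0 : g 0 ≠ 0) :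
    ∃ (a c : ℂ) (b : Fin d → ℂ), ∀ ξ : EuclideanSpace ℝ (Fin d),
      g ξ = Complex.exp (a * ‖ξ‖ + ∑ j, b j * ξ j + c) := by
  classical
  have hpair : ∀ η₁ η₂ η₁' η₂' : EuclideanSpace ℝ (Fin d),
      ‖η₁‖ + ‖η₂‖ = ‖η₁'‖ + ‖η₂'‖ → η₁ + η₂ = η₁' + η₂' →
      g η₁ * g η₂ = g η₁' * g η₂' := by
    intro η₁ η₂ η₁' η₂' h1 h2
    rw [heq, heq, h1, h2]
  -- the ray exponents
  have hray : ∀ ξ : EuclideanSpace ℝ (Fin d), ∃ z : ℂ, ∀ t : ℝ, 0 ≤ t →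
      g (t • ξ) / g 0 = Complex.exp (t * z) := by
    intro ξ
    apply ray_exp
    · exact (hg.comp ((continuous_id.smul continuous_const))).div_const _
    · rw [zero_smul, div_self h0]
    · intro s t hs ht
      have hnorm : ‖s • ξ‖ + ‖t • ξ‖ = ‖(s+t) • ξ‖ + ‖(0:EuclideanSpace ℝ (Fin d))‖ := by
        rw [norm_smul_of_nonneg hs, norm_smul_of_nonneg ht,
          norm_smul_of_nonneg (by linarith), norm_zero]
        ring
      have hsum : s • ξ + t • ξ = (s+t) • ξ + 0 := by rw [add_zero, add_smul]
      have h := hpair _ _ _ _ hnorm hsum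
      rw [div_mul_div_comm, h, mul_comm (g ((s+t) • ξ)) (g 0), mul_div_mul_left _ _ h0]
  choose Λ hΛ using hray
  have hΛuniq : ∀ (ξ : EuclideanSpace ℝ (Fin d)) (z : ℂ),
      (∀ t : ℝ, 0 ≤ t → g (t • ξ) / g 0 = Complex.exp (t * z)) → Λ ξ = z := by
    intro ξ z h
    exact exp_ray_unique (fun t ht => by rw [← hΛ ξ t ht, h t ht])
  have hhom : ∀ (s : ℝ), 0 ≤ s → ∀ ξ, Λ (s • ξ) = (s:ℂ) * Λ ξ := by
    intro s hs ξ
    apply hΛuniq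
    intro t ht
    rw [smul_smul, hΛ ξ (t*s) (mul_nonneg ht hs)]
    congr 1
    push_cast
    ring
  have hΛ0 : Λ 0 = 0 := by
    have := hhom 0 le_rfl 0
    rwa [zero_smul, Complex.ofReal_zero, zero_mul] at this
  have hΛpair : ∀ η₁ η₂ η₁' η₂' : EuclideanSpace ℝ (Fin d),
      ‖η₁‖ + ‖η₂‖ = ‖η₁'‖ + ‖η₂'‖ → η₁ + η₂ = η₁' + η₂' →
      Λ η₁ + Λ η₂ = Λ η₁' + Λ η₂' := by
    intro η₁ η₂ η₁' η₂' h1 h2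
    apply exp_ray_unique
    intro t ht
    rw [mul_add, Complex.exp_add, mul_add, Complex.exp_add,
      ← hΛ η₁ t ht, ← hΛ η₂ t ht, ← hΛ η₁' t ht, ← hΛ η₂' t ht]
    have hn : ‖t • η₁‖ + ‖t • η₂‖ = ‖t • η₁'‖ + ‖t • η₂'‖ := by
      rw [norm_smul_of_nonneg ht, norm_smul_of_nonneg ht,
        norm_smul_of_nonneg ht, norm_smul_of_nonneg ht, ← mul_add, ← mul_add, h1]
    have hs : t • η₁ + t • η₂ = t • η₁' + t • η₂' := by
      rw [← smul_add, ← smul_add, h2]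
    have h := hpair _ _ _ _ hn hs
    rw [div_mul_div_comm, div_mul_div_comm, h]
  -- the constant a
  have hdpos : 0 < d := by omega
  set e₁ : EuclideanSpace ℝ (Fin d) := EuclideanSpace.single ⟨0, hdpos⟩ 1 with he₁
  have he₁norm : ‖e₁‖ = 1 := by simp [he₁, EuclideanSpace.norm_single]
  set a : ℂ := (Λ e₁ + Λ (-e₁)) / 2 with ha
  have hK : ∀ x : EuclideanSpace ℝ (Fin d), Λ x + Λ (-x) = (‖x‖ : ℂ) * (2 * a) := by
    intro x
    by_cases hx : x = 0
    · rw [hx, neg_zero, hΛ0, norm_zero]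
      simp
    · have hxn : (0:ℝ) < ‖x‖ := norm_pos_iff.mpr hx
      set u : EuclideanSpace ℝ (Fin d) := ‖x‖⁻¹ • x with hu
      have hun : ‖u‖ = 1 := by
        rw [hu, norm_smul_of_nonneg (by positivity), inv_mul_cancel₀ hxn.ne']
      have hxu : x = ‖x‖ • u := by
        rw [hu, smul_smul, mul_inv_cancel₀ hxn.ne', one_smul]
      have hpairu : Λ u + Λ (-u) = Λ e₁ + Λ (-e₁) := by
        apply hΛpair
        · rw [norm_neg, norm_neg, hun, he₁norm]
        · rw [add_neg_cancel, add_neg_cancel]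
      have h1 : Λ x = (‖x‖:ℂ) * Λ u := by
        conv_lhs => rw [hxu]
        rw [hhom _ hxn.le]
      have h2 : Λ (-x) = (‖x‖:ℂ) * Λ (-u) := by
        have hnx : -x = ‖x‖ • (-u) := by
          conv_lhs => rw [hxu]
          exact (smul_neg _ _).symm
        rw [hnx, hhom _ hxn.le]
      rw [h1, h2, ha]
      linear_combination ((‖x‖:ℝ):ℂ) * hpairu
  set N : EuclideanSpace ℝ (Fin d) → ℂ := fun x => Λ x - a * (‖x‖:ℝ) with hN
  have hN0 : N 0 = 0 := by rw [hN]; simp [hΛ0]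
  have hNneg : ∀ x, N (-x) = - N x := by
    intro x
    have := hK x
    rw [hN]
    simp only [norm_neg]
    have h := hK x
    linear_combination h
  have hNhom : ∀ (t : ℝ), 0 ≤ t → ∀ x, N (t • x) = (t:ℂ) * N x := by
    intro t ht x
    rw [hN]
    simp only
    rw [hhom t ht, norm_smul_of_nonneg ht]
    push_cast
    ring
  have hNhomℝ : ∀ (t : ℝ) (x : EuclideanSpace ℝ (Fin d)), N (t • x) = (t:ℂ) * N x := by
    intro t x
    rcases le_or_gt 0 t with h | h
    · exact hNhom t h x
    · have h1 : t • x = -((-t) • x) := by rw [neg_smul, neg_neg]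
      rw [h1, hNneg, hNhom (-t) (by linarith)]
      push_cast
      ring
  have hNpair : ∀ η₁ η₂ η₁' η₂' : EuclideanSpace ℝ (Fin d),
      ‖η₁‖ + ‖η₂‖ = ‖η₁'‖ + ‖η₂'‖ → η₁ + η₂ = η₁' + η₂' →
      N η₁ + N η₂ = N η₁' + N η₂' := by
    intro η₁ η₂ η₁' η₂' h1 h2
    have h := hΛpair _ _ _ _ h1 h2
    rw [hN]
    simp only
    have h1' : ((‖η₁‖:ℝ):ℂ) + ((‖η₂‖:ℝ):ℂ) = ((‖η₁'‖:ℝ):ℂ) + ((‖η₂'‖:ℝ):ℂ) := by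
      exact_mod_cast congrArg (fun r : ℝ => (r : ℂ)) h1
    linear_combination h - a * h1'
  -- additivity for equal norms
  have heqnorm : ∀ u v : EuclideanSpace ℝ (Fin d), ‖u‖ = ‖v‖ → N u + N v = N (u + v) := by
    intro u v huv
    by_cases hm : u + v = 0
    · have hvu : v = -u := by
        have h' := hm
        rw [add_comm] at h'
        rwa [add_eq_zero_iff_eq_neg] at h'
      rw [hvu, hNneg, show u + -u = (0:EuclideanSpace ℝ (Fin d)) from add_neg_cancel u, hN0]
      ring
    · have hmne : (2:ℝ)⁻¹ • (u + v) ≠ 0 := by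
        simp only [ne_eq, smul_eq_zero]
        push_neg
        exact ⟨by norm_num, hm⟩
      set m : EuclideanSpace ℝ (Fin d) := (2:ℝ)⁻¹ • (u + v) with hmdef
      have hμpos : 0 < ‖m‖ := norm_pos_iff.mpr hmne
      have hspos : 0 ≤ ‖u‖ := norm_nonneg u
      have hμs : ‖m‖ ≤ ‖u‖ := by
        rw [hmdef, norm_smul_of_nonneg (by norm_num)]
        have h2 := norm_add_le u v
        rw [← huv] at h2
        linarith
      set mh : EuclideanSpace ℝ (Fin d) := ‖m‖⁻¹ • m with hmh
      have hmhn : ‖mh‖ = 1 := by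
        rw [hmh, norm_smul_of_nonneg (by positivity), inv_mul_cancel₀ hμpos.ne']
      have hmmh : (2 * ‖m‖) • mh = u + v := by
        rw [hmh, smul_smul, mul_assoc, mul_inv_cancel₀ hμpos.ne', mul_one, hmdef,
          smul_smul]
        norm_num
      have hn1 : ‖(‖m‖ + ‖u‖) • mh‖ = ‖m‖ + ‖u‖ := by
        rw [norm_smul_of_nonneg (by linarith), hmhn, mul_one]
      have hn2 : ‖(‖m‖ - ‖u‖) • mh‖ = ‖u‖ - ‖m‖ := by
        have he : (‖m‖ - ‖u‖) • mh = -((‖u‖ - ‖m‖) • mh) := by module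
        rw [he, norm_neg, norm_smul_of_nonneg (by linarith), hmhn, mul_one]
      have hstep : N u + N v = N ((‖m‖ + ‖u‖) • mh) + N ((‖m‖ - ‖u‖) • mh) := by
        apply hNpair
        · rw [hn1, hn2, ← huv]
          ring
        · rw [← add_smul]
          have he2 : ‖m‖ + ‖u‖ + (‖m‖ - ‖u‖) = 2 * ‖m‖ := by ring
          rw [he2, hmmh]
      rw [hstep, hNhomℝ (‖m‖ + ‖u‖) mh, hNhomℝ (‖m‖ - ‖u‖) mh, ← hmmh,
        hNhomℝ (2 * ‖m‖) mh]
      push_cast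
      ring
  -- full additivity
  have hNadd : ∀ x y : EuclideanSpace ℝ (Fin d), N x + N y = N (x + y) := by
    intro x y
    by_cases hξ : x + y = 0
    · have hyx : y = -x := by
        have h' := hξ
        rw [add_comm] at h'
        rwa [add_eq_zero_iff_eq_neg] at h'
      rw [hyx, hNneg, show x + -x = (0:EuclideanSpace ℝ (Fin d)) from add_neg_cancel x, hN0]
      ring
    · obtain ⟨w, hwn, hww⟩ := exists_unit_orthogonal hd (x + y)
      have hτξ : ‖x + y‖ ≤ ‖x‖ + ‖y‖ := norm_add_le x y
      have hβnn : (0:ℝ) ≤ Real.sqrt ((‖x‖ + ‖y‖)^2 - ‖x + y‖^2) / 2 := by positivity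
      set β : ℝ := Real.sqrt ((‖x‖ + ‖y‖)^2 - ‖x + y‖^2) / 2 with hβ
      have hβsq : β^2 = ((‖x‖ + ‖y‖)^2 - ‖x + y‖^2)/4 := by
        rw [hβ, div_pow, Real.sq_sqrt (by nlinarith [norm_nonneg (x+y)])]
        norm_num
      have hinner : (inner ℝ ((2:ℝ)⁻¹ • (x + y)) (β • w) : ℝ) = 0 := by
        rw [real_inner_smul_left, real_inner_smul_right, hww]
        ring
      have hnu : ‖(2:ℝ)⁻¹ • (x + y) + β • w‖ = (‖x‖ + ‖y‖)/2 := by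
        have hsq : ‖(2:ℝ)⁻¹ • (x + y) + β • w‖^2 = ((‖x‖ + ‖y‖)/2)^2 := by
          rw [norm_add_sq_real, hinner, norm_smul_of_nonneg (by norm_num : (0:ℝ) ≤ 2⁻¹),
            norm_smul_of_nonneg hβnn, hwn, mul_one]
          nlinarith [hβsq]
        have h1 : ‖(2:ℝ)⁻¹ • (x + y) + β • w‖ = Real.sqrt (‖(2:ℝ)⁻¹ • (x + y) + β • w‖^2) :=
          (Real.sqrt_sq (norm_nonneg _)).symm
        rw [h1, hsq, Real.sqrt_sq (by positivity)]
      have hnv : ‖(2:ℝ)⁻¹ • (x + y) - β • w‖ = (‖x‖ + ‖y‖)/2 := by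
        have hsq : ‖(2:ℝ)⁻¹ • (x + y) - β • w‖^2 = ((‖x‖ + ‖y‖)/2)^2 := by
          rw [norm_sub_sq_real, hinner, norm_smul_of_nonneg (by norm_num : (0:ℝ) ≤ 2⁻¹),
            norm_smul_of_nonneg hβnn, hwn, mul_one]
          nlinarith [hβsq]
        have h1 : ‖(2:ℝ)⁻¹ • (x + y) - β • w‖ = Real.sqrt (‖(2:ℝ)⁻¹ • (x + y) - β • w‖^2) :=
          (Real.sqrt_sq (norm_nonneg _)).symm
        rw [h1, hsq, Real.sqrt_sq (by positivity)]
      have hsum' : ((2:ℝ)⁻¹ • (x + y) + β • w) + ((2:ℝ)⁻¹ • (x + y) - β • w) = x + y := by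
        module
      have hstep : N x + N y = N ((2:ℝ)⁻¹ • (x + y) + β • w) + N ((2:ℝ)⁻¹ • (x + y) - β • w) := by
        apply hNpair
        · rw [hnu, hnv]
          ring
        · rw [hsum']
      rw [hstep, heqnorm _ _ (by rw [hnu, hnv]), hsum']
  -- basis expansion
  have hbasis : ∀ ξ : EuclideanSpace ℝ (Fin d),
      ξ = ∑ j, (ξ j) • EuclideanSpace.single j (1:ℝ) := by
    intro ξ
    conv_lhs => rw [← (EuclideanSpace.basisFun (Fin d) ℝ).sum_repr ξ]
    refine Finset.sum_congr rfl fun j _ => ?_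
    rw [EuclideanSpace.basisFun_repr, EuclideanSpace.basisFun_apply]
  set b : Fin d → ℂ := fun j => N (EuclideanSpace.single j (1:ℝ)) with hb
  have hNfinsum : ∀ (s : Finset (Fin d)) (f : Fin d → EuclideanSpace ℝ (Fin d)),
      N (∑ j ∈ s, f j) = ∑ j ∈ s, N (f j) := by
    intro s f
    induction s using Finset.induction_on with
    | empty => simpa using hN0
    | insert _ _ hnotmem ih =>
      rw [Finset.sum_insert hnotmem, Finset.sum_insert hnotmem, ← hNadd, ih]
  have hNsum : ∀ ξ : EuclideanSpace ℝ (Fin d), N ξ = ∑ j, b j * ((ξ j : ℝ):ℂ) := by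
    intro ξ
    conv_lhs => rw [hbasis ξ]
    rw [hNfinsum]
    refine Finset.sum_congr rfl fun j _ => ?_
    rw [hNhomℝ, hb]
    ring
  refine ⟨a, Complex.log (g 0), b, fun ξ => ?_⟩
  have hgξ : g ξ = g 0 * Complex.exp (Λ ξ) := by
    have h1 := hΛ ξ 1 zero_le_one
    rw [one_smul, Complex.ofReal_one, one_mul] at h1
    rw [← h1, mul_div_cancel₀ _ h0]
  have hΛξ : Λ ξ = a * (‖ξ‖:ℝ) + N ξ := by
    rw [hN]
    ring
  rw [hgξ, hΛξ, hNsum ξ]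
  conv_lhs => rw [← Complex.exp_log h0]
  rw [← Complex.exp_add]
  congr 1
  ring
end
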